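/- Euler's identity: ζ(2,1) = ζ(3), i.e. the double sum ∑_{n>m≥1} 1/(n²m) equals ∑_{n≥1} 1/n³. -/

import Mathlib

open Finset Filter Topology

namespace ZetaEuler

/-- `g m = 1/(m+1)`. -/
noncomputable def g (m : ℕ) : ℝ := 1 / ((m : ℝ) + 1)

/-- Harmonic number `H k = ∑_{j=1}^k 1/j`. -/
noncomputable def H (k : ℕ) : ℝ := ∑ j ∈ Finset.range k, g j

lemma g_nonneg (m : ℕ) : 0 ≤ g m := by unfold g; positivity

lemma H_nonneg (k : ℕ) : 0 ≤ H k := Finset.sum_nonneg fun j _ => g_nonneg j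

lemma H_succ (k : ℕ) : H (k + 1) = H k + 1 / ((k : ℝ) + 1) := by
  simp [H, Finset.sum_range_succ, g]

lemma H_le_sqrt (k : ℕ) : H k ≤ 2 * Real.sqrt k := by
  induction k with
  | zero => simp [H]
  | succ n ih =>
    rw [H_succ]
    set a := Real.sqrt ((n : ℝ) + 1) with ha
    set b := Real.sqrt (n : ℝ) with hb
    have ha2 : a ^ 2 = (n : ℝ) + 1 := Real.sq_sqrt (by positivity)
    have hb2 : b ^ 2 = (n : ℝ) := Real.sq_sqrt (by positivity)
    have ha0 : 0 ≤ a := Real.sqrt_nonneg _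
    have hb0 : 0 ≤ b := Real.sqrt_nonneg _
    have ha1 : 1 ≤ a := by nlinarith
    have key : 1 / ((n : ℝ) + 1) ≤ 2 * (a - b) := by
      rw [div_le_iff₀ (by positivity)]
      nlinarith [sq_nonneg (a - b), sq_nonneg (a + b)]
    have hcast : Real.sqrt ((n + 1 : ℕ) : ℝ) = a := by push_cast; rfl
    rw [hcast]
    linarith

lemma g_tendsto (i : ℕ) : Tendsto (fun N : ℕ => g (N + i)) atTop (𝓝 0) := by
  have h1 : Tendsto (fun N : ℕ => ((N + i : ℕ) : ℝ) + 1) atTop atTop := by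
    apply tendsto_atTop_add_const_right
    exact tendsto_natCast_atTop_atTop.comp (tendsto_add_atTop_nat i)
  have := h1.inv_tendsto_atTop
  simpa [g, one_div, Function.comp, Pi.inv_def] using this

lemma g_anti {m n : ℕ} (h : m ≤ n) : g n ≤ g m := by
  unfold g
  apply one_div_le_one_div_of_le (by positivity)
  have : (m : ℝ) ≤ (n : ℝ) := Nat.cast_le.mpr h
  linarith

lemma hasSum_consec (i : ℕ) :
    HasSum (fun m : ℕ => g (m + i) - g (m + 1 + i)) (g i) := by
  have hnn : ∀ m : ℕ, 0 ≤ g (m + i) - g (m + 1 + i) := by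
    intro m
    have := g_anti (show m + i ≤ m + 1 + i by omega)
    linarith
  rw [hasSum_iff_tendsto_nat_of_nonneg hnn]
  have key : ∀ N : ℕ, ∑ m ∈ Finset.range N, (g (m + i) - g (m + 1 + i))
      = g i - g (N + i) := by
    intro N
    calc ∑ m ∈ Finset.range N, (g (m + i) - g (m + 1 + i))
        = ∑ m ∈ Finset.range N, ((fun m => g (m + i)) m - (fun m => g (m + i)) (m + 1)) :=
          Finset.sum_congr rfl fun m _ => rfl
      _ = g (0 + i) - g (N + i) := Finset.sum_range_sub' (fun m => g (m + i)) N
      _ = g i - g (N + i) := by rw [Nat.zero_add]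
  simp only [key]
  simpa using tendsto_const_nhds.sub (g_tendsto i)

lemma hasSum_tele (c : ℕ) : HasSum (fun m : ℕ => g m - g (m + c)) (H c) := by
  have h1 : ∀ i ∈ Finset.range c, HasSum (fun m : ℕ => g (m + i) - g (m + 1 + i)) (g i) :=
    fun i _ => hasSum_consec i
  have h2 := hasSum_sum h1
  have h3 : ∀ m : ℕ, ∑ i ∈ Finset.range c, (g (m + i) - g (m + 1 + i)) = g m - g (m + c) := by
    intro m
    calc ∑ i ∈ Finset.range c, (g (m + i) - g (m + 1 + i))
        = ∑ i ∈ Finset.range c, ((fun i => g (m + i)) i - (fun i => g (m + i)) (i + 1)) :=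
          Finset.sum_congr rfl fun i _ => by simp only []; congr 2; omega
      _ = g (m + 0) - g (m + c) := Finset.sum_range_sub' (fun i => g (m + i)) c
      _ = g m - g (m + c) := by rw [Nat.add_zero]
  have h4 : (fun m : ℕ => ∑ i ∈ Finset.range c, (g (m + i) - g (m + 1 + i)))
      = fun m : ℕ => g m - g (m + c) := funext h3
  rw [h4] at h2
  exact h2

lemma hasSum_inner (k : ℕ) :
    HasSum (fun m : ℕ => 1 / (((m : ℝ) + 1) * ((m : ℝ) + (k : ℝ) + 2)))
      (H (k + 1) / ((k : ℝ) + 1)) := by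
  have h := (hasSum_tele (k + 1)).div_const ((k : ℝ) + 1)
  have e : (fun m : ℕ => (g m - g (m + (k + 1))) / ((k : ℝ) + 1))
      = fun m : ℕ => 1 / (((m : ℝ) + 1) * ((m : ℝ) + (k : ℝ) + 2)) := by
    funext m
    simp only [g]
    push_cast
    have h1 : (m : ℝ) + 1 ≠ 0 := by positivity
    have h2 : (m : ℝ) + ((k : ℝ) + 1) + 1 ≠ 0 := by positivity
    have h3 : (k : ℝ) + 1 ≠ 0 := by positivity
    field_simp
    ring
  rw [e] at h
  exact h

/-- `F (k, m) = 1/((m+1)(k+1)(m+k+2))`, i.e. `1/(m'k'(m'+k'))` for positive `m',k'`. -/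
noncomputable def F (p : ℕ × ℕ) : ℝ :=
  1 / (((p.2 : ℝ) + 1) * ((p.1 : ℝ) + 1) * ((p.2 : ℝ) + (p.1 : ℝ) + 2))

lemma F_nonneg (p : ℕ × ℕ) : 0 ≤ F p := by unfold F; positivity

lemma hasSum_F_inner (k : ℕ) :
    HasSum (fun m : ℕ => F (k, m)) (H (k + 1) / ((k : ℝ) + 1) ^ 2) := by
  have h := (hasSum_inner k).div_const ((k : ℝ) + 1)
  have e : (fun m : ℕ => 1 / (((m : ℝ) + 1) * ((m : ℝ) + (k : ℝ) + 2)) / ((k : ℝ) + 1))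
      = fun m : ℕ => F (k, m) := by
    funext m
    simp only [F]
    have h1 : (m : ℝ) + 1 ≠ 0 := by positivity
    have h2 : (m : ℝ) + (k : ℝ) + 2 ≠ 0 := by positivity
    have h3 : (k : ℝ) + 1 ≠ 0 := by positivity
    field_simp
  rw [e] at h
  have ev : H (k + 1) / ((k : ℝ) + 1) / ((k : ℝ) + 1) = H (k + 1) / ((k : ℝ) + 1) ^ 2 := by
    rw [div_div, sq]
  rw [ev] at h
  exact h

lemma summable_outer : Summable (fun k : ℕ => H (k + 1) / ((k : ℝ) + 1) ^ 2) := by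
  have hs : Summable (fun k : ℕ => 2 / ((k : ℝ) + 1) ^ ((3 : ℝ) / 2)) := by
    have h0 : Summable (fun n : ℕ => 1 / (n : ℝ) ^ ((3 : ℝ) / 2)) :=
      Real.summable_one_div_nat_rpow.2 (by norm_num)
    have h1 : Summable (fun n : ℕ => 1 / ((n + 1 : ℕ) : ℝ) ^ ((3 : ℝ) / 2)) :=
      (summable_nat_add_iff 1).2 h0
    have h2 : Summable (fun n : ℕ => 1 / ((n : ℝ) + 1) ^ ((3 : ℝ) / 2)) := by
      apply h1.congr
      intro n; push_cast; ring_nf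
    simpa [div_eq_mul_inv, mul_comm] using h2.mul_left 2
  apply Summable.of_nonneg_of_le _ _ hs
  · intro k
    have := H_nonneg (k + 1)
    positivity
  · intro k
    set x : ℝ := (k : ℝ) + 1 with hx
    have hx0 : (0 : ℝ) < x := by positivity
    have hx1 : (0 : ℝ) ≤ x := le_of_lt hx0
    have hH : H (k + 1) ≤ 2 * Real.sqrt x := by
      have := H_le_sqrt (k + 1)
      have hcast : ((k + 1 : ℕ) : ℝ) = x := by push_cast; rfl
      rwa [hcast] at this
    have hrp : (0 : ℝ) < x ^ ((3 : ℝ) / 2) := Real.rpow_pos_of_pos hx0 _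
    have key : Real.sqrt x * x ^ ((3 : ℝ) / 2) = x ^ 2 := by
      rw [Real.sqrt_eq_rpow, ← Real.rpow_add hx0]
      norm_num
    rw [div_le_div_iff₀ (by positivity) hrp]
    calc H (k + 1) * x ^ ((3 : ℝ) / 2) ≤ (2 * Real.sqrt x) * x ^ ((3 : ℝ) / 2) :=
          mul_le_mul_of_nonneg_right hH (le_of_lt hrp)
      _ = 2 * (Real.sqrt x * x ^ ((3 : ℝ) / 2)) := by ring
      _ = 2 * x ^ 2 := by rw [key]

lemma summable_F : Summable F := by
  rw [summable_prod_of_nonneg F_nonneg]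
  constructor
  · intro k; exact (hasSum_F_inner k).summable
  · exact summable_outer.congr fun k => ((hasSum_F_inner k).tsum_eq).symm

lemma summable_G : Summable (fun k : ℕ => H k / ((k : ℝ) + 1) ^ 2) := by
  apply Summable.of_nonneg_of_le _ _ summable_outer
  · intro k
    have := H_nonneg k
    positivity
  · intro k
    rw [H_succ]
    have h0 : (0 : ℝ) ≤ 1 / ((k : ℝ) + 1) := by positivity
    gcongr
    linarith

lemma summable_Z3 : Summable (fun n : ℕ => 1 / ((n : ℝ) + 1) ^ 3) := by
  have h0 : Summable (fun n : ℕ => 1 / (n : ℝ) ^ (3 : ℕ)) :=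
    Real.summable_one_div_nat_pow.2 (by norm_num)
  have h1 := (summable_nat_add_iff 1).2 h0
  apply h1.congr
  intro n; push_cast; ring_nf

lemma S_eq_GZ : ∑' p, F p = (∑' k : ℕ, H k / ((k : ℝ) + 1) ^ 2)
    + ∑' n : ℕ, 1 / ((n : ℝ) + 1) ^ 3 := by
  rw [Summable.tsum_prod' summable_F (fun k => (hasSum_F_inner k).summable)]
  rw [tsum_congr (fun k => (hasSum_F_inner k).tsum_eq)]
  have hsplit : ∀ k : ℕ, H (k + 1) / ((k : ℝ) + 1) ^ 2
      = H k / ((k : ℝ) + 1) ^ 2 + 1 / ((k : ℝ) + 1) ^ 3 := by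
    intro k
    rw [H_succ]
    have h1 : (k : ℝ) + 1 ≠ 0 := by positivity
    field_simp
  rw [tsum_congr hsplit]
  exact Summable.tsum_add summable_G summable_Z3

/-- `F1 (k, m) = 1/((m+k+2)^2 (m+1))`. -/
noncomputable def F1 (p : ℕ × ℕ) : ℝ :=
  1 / (((p.2 : ℝ) + (p.1 : ℝ) + 2) ^ 2 * ((p.2 : ℝ) + 1))

/-- `F2 (k, m) = 1/((m+k+2)^2 (k+1))`. -/
noncomputable def F2 (p : ℕ × ℕ) : ℝ :=
  1 / (((p.2 : ℝ) + (p.1 : ℝ) + 2) ^ 2 * ((p.1 : ℝ) + 1))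

lemma F1_nonneg (p : ℕ × ℕ) : 0 ≤ F1 p := by unfold F1; positivity
lemma F2_nonneg (p : ℕ × ℕ) : 0 ≤ F2 p := by unfold F2; positivity

lemma F_eq_add (p : ℕ × ℕ) : F p = F1 p + F2 p := by
  obtain ⟨k, m⟩ := p
  simp only [F, F1, F2]
  have h1 : (m : ℝ) + 1 ≠ 0 := by positivity
  have h2 : (k : ℝ) + 1 ≠ 0 := by positivity
  have h3 : (m : ℝ) + (k : ℝ) + 2 ≠ 0 := by positivity
  field_simp
  ring

lemma summable_F1 : Summable F1 :=
  Summable.of_nonneg_of_le F1_nonneg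
    (fun p => by have := F2_nonneg p; have := F_eq_add p; linarith) summable_F

lemma summable_F2 : Summable F2 :=
  Summable.of_nonneg_of_le F2_nonneg
    (fun p => by have := F1_nonneg p; have := F_eq_add p; linarith) summable_F

lemma tsum_F2_eq : ∑' p, F2 p = ∑' p, F1 p := by
  rw [← (Equiv.prodComm ℕ ℕ).tsum_eq F1]
  apply tsum_congr
  intro p
  simp only [F1, F2, Equiv.coe_prodComm, Prod.fst_swap, Prod.snd_swap]
  ring_nf

lemma S_eq_two : ∑' p, F p = 2 * ∑' p, F1 p := by
  rw [tsum_congr F_eq_add, Summable.tsum_add summable_F1 summable_F2, tsum_F2_eq]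
  ring

/-- The index type of the theorem. -/
abbrev T := {p : ℕ × ℕ // p.2 < p.1 ∧ 1 ≤ p.2}

noncomputable def t (p : T) : ℝ := (1 : ℝ) / ((p.1.1 : ℝ) ^ 2 * (p.1.2 : ℝ))

/-- `(k, m) ↦ (m + k + 2, m + 1)`. -/
def e1 : ℕ × ℕ ≃ T where
  toFun p := ⟨(p.2 + p.1 + 2, p.2 + 1), by constructor <;> omega⟩
  invFun q := (q.1.1 - q.1.2 - 1, q.1.2 - 1)
  left_inv p := by
    obtain ⟨k, m⟩ := p
    simp only []
    congr 1 <;> omega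
  right_inv q := by
    obtain ⟨⟨n, m⟩, h1, h2⟩ := q
    apply Subtype.ext
    simp only []
    have h1' : m < n := h1
    have h2' : 1 ≤ m := h2
    congr 1 <;> omega

lemma A_eq_F1 : ∑' p : T, t p = ∑' p, F1 p := by
  rw [← e1.tsum_eq t]
  apply tsum_congr
  intro p
  obtain ⟨k, m⟩ := p
  simp only [t, e1, F1, Equiv.coe_fn_mk, Function.comp_apply]
  push_cast
  ring_nf

/-- `⟨k, i⟩ ↦ (k + 1, i + 1)`. -/
def e2 : (Σ k : ℕ, Fin k) ≃ T where
  toFun σ := ⟨(σ.1 + 1, σ.2.val + 1), by have := σ.2.isLt; constructor <;> omega⟩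
  invFun q := ⟨q.1.1 - 1, ⟨q.1.2 - 1, by have h1 := q.2.1; have h2 := q.2.2; omega⟩⟩
  left_inv σ := rfl
  right_inv q := by
    obtain ⟨⟨n, m⟩, h1, h2⟩ := q
    apply Subtype.ext
    simp only []
    have h1' : m < n := h1
    have h2' : 1 ≤ m := h2
    congr 1 <;> omega

lemma summable_t : Summable t := by
  rw [← e1.summable_iff]
  apply summable_F1.congr
  intro p
  obtain ⟨k, m⟩ := p
  simp only [t, e1, F1, Equiv.coe_fn_mk, Function.comp_apply]
  push_cast
  ring_nf

lemma A_eq_G : ∑' p : T, t p = ∑' k : ℕ, H k / ((k : ℝ) + 1) ^ 2 := by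
  rw [← e2.tsum_eq t]
  have hsum : Summable (fun σ : Σ k : ℕ, Fin k => t (e2 σ)) := e2.summable_iff.2 summable_t
  rw [Summable.tsum_sigma' (fun k => Summable.of_finite) hsum]
  apply tsum_congr
  intro k
  rw [tsum_fintype]
  have : ∀ i : Fin k, t (e2 ⟨k, i⟩) = g i.val / ((k : ℝ) + 1) ^ 2 := by
    intro i
    simp only [t, e2, g, Equiv.coe_fn_mk]
    push_cast
    have h1 : (k : ℝ) + 1 ≠ 0 := by positivity
    have h2 : (i : ℝ) + 1 ≠ 0 := by positivity
    field_simp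
  rw [Finset.sum_congr rfl (fun i _ => this i)]
  rw [← Finset.sum_div]
  congr 1
  exact Fin.sum_univ_eq_sum_range (fun j => g j) k

end ZetaEuler

/-- Euler's identity: ζ(2,1) = ζ(3). -/
theorem zeta_two_one_eq_zeta_three :
    (∑' p : {p : ℕ × ℕ // p.2 < p.1 ∧ 1 ≤ p.2},
      (1 : ℝ) / ((p.1.1 : ℝ) ^ 2 * (p.1.2 : ℝ))) =
    ∑' n : ℕ, (1 : ℝ) / ((n : ℝ) + 1) ^ 3 := by
  have hA : (∑' p : {p : ℕ × ℕ // p.2 < p.1 ∧ 1 ≤ p.2},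
      (1 : ℝ) / ((p.1.1 : ℝ) ^ 2 * (p.1.2 : ℝ))) = ∑' p : ZetaEuler.T, ZetaEuler.t p := rfl
  rw [hA]
  have h1 := ZetaEuler.S_eq_two
  have h2 := ZetaEuler.S_eq_GZ
  have h3 := ZetaEuler.A_eq_F1
  have h4 := ZetaEuler.A_eq_G
  have := h1.symm.trans h2
  linarith [h3, h4, this]
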